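/- Let A be a d×d matrix over ℝ ∪ {-∞} with no row of -∞, and suppose ρ_max(A) ≤ 0, where ρ_max(A) is the maximum average weight of an elementary circuit of the graph of A. Then for all n ≥ d and all x ∈ ℝ^d: max_i (A^{⊗n} x)_i ≤ (n-d)·ρ_max(A) + d·max_{A_{ij} > -∞} |A_{ij}| + max_i x_i. -/

import Mathlib

/-- The `(max,+)` matrix product over the semiring `(ℝ ∪ {-∞}, max, +)`. -/
def mpMul {d : ℕ} (A B : Fin d → Fin d → WithBot ℝ) : Fin d → Fin d → WithBot ℝ :=
  fun i j => Finset.univ.sup (fun p => A i p + B p j)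

/-- The `n`-th `(max,+)` power of a matrix. -/
def mpPow {d : ℕ} (A : Fin d → Fin d → WithBot ℝ) : ℕ → Fin d → Fin d → WithBot ℝ
  | 0 => fun i j => if i = j then (0 : WithBot ℝ) else ⊥
  | n + 1 => mpMul A (mpPow A n)

/-- `p : Fin (c+1) → Fin d` is an elementary circuit of the graph of `A`:
a closed path of positive length along finite entries of `A`, visiting no node twice. -/
def IsElemCircuit {d : ℕ} (A : Fin d → Fin d → WithBot ℝ) (c : ℕ)
    (p : Fin (c + 1) → Fin d) : Prop :=
  0 < c ∧ p 0 = p (Fin.last c) ∧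
  (∀ k : Fin c, A (p k.castSucc) (p k.succ) ≠ ⊥) ∧
  Function.Injective (fun k : Fin c => p k.castSucc)

/-- The set of average weights of elementary circuits of `A`;
`ρ_max(A)` is its supremum (its maximum, the set being finite and nonempty). -/
def circuitAvgWeights {d : ℕ} (A : Fin d → Fin d → WithBot ℝ) : Set ℝ :=
  {r : ℝ | ∃ (c : ℕ) (p : Fin (c + 1) → Fin d), IsElemCircuit A c p ∧
    r = (∑ k : Fin c, WithBot.unbotD 0 (A (p k.castSucc) (p k.succ))) / c}

private lemma mpPow_le_of_paths {d : ℕ} (A : Fin d → Fin d → WithBot ℝ) :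
    ∀ (n : ℕ) (B : ℝ) (i j : Fin d),
      (∀ f : ℕ → Fin d, f 0 = i → f n = j → (∀ k < n, A (f k) (f (k+1)) ≠ ⊥) →
        ∑ k ∈ Finset.range n, WithBot.unbotD 0 (A (f k) (f (k+1))) ≤ B) →
      mpPow A n i j ≤ (B : WithBot ℝ) := by
  intro n
  induction n with
  | zero =>
    intro B i j h
    simp only [mpPow]
    split_ifs with hij
    · subst hij
      have h0 := h (fun _ => i) rfl rfl (by omega)
      simp only [Finset.sum_range_zero] at h0
      exact_mod_cast (by exact_mod_cast h0 : ((0:ℝ) : WithBot ℝ) ≤ (B : WithBot ℝ))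
    · exact bot_le
  | succ n IH =>
    intro B i j h
    show mpMul A (mpPow A n) i j ≤ _
    unfold mpMul
    apply Finset.sup_le
    intro p _
    rcases eq_or_ne (A i p) ⊥ with hip | hip
    · simp [hip]
    · obtain ⟨a, ha⟩ := WithBot.ne_bot_iff_exists.mp hip
      have hIH : mpPow A n p j ≤ ((B - a : ℝ) : WithBot ℝ) := by
        apply IH (B - a) p j
        intro f hf0 hfn hfv
        set f' : ℕ → Fin d := fun k => if k = 0 then i else f (k - 1) with hf'
        have h1 : f' 0 = i := rfl
        have h2 : f' (n+1) = j := by simp [hf', hfn]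
        have h3 : ∀ k < n + 1, A (f' k) (f' (k+1)) ≠ ⊥ := by
          intro k hk
          match k with
          | 0 => simpa [hf', hf0] using hip
          | (k'+1) =>
            have : k' < n := by omega
            simpa [hf'] using hfv k' this
        have := h f' h1 h2 h3
        rw [Finset.sum_range_succ'] at this
        have e0 : WithBot.unbotD 0 (A (f' 0) (f' 1)) = a := by
          simp [hf', hf0, ← ha]
        have e1 : ∀ k, WithBot.unbotD 0 (A (f' (k+1)) (f' (k+1+1)))
            = WithBot.unbotD 0 (A (f k) (f (k+1))) := by
          intro k; simp [hf']
        rw [e0] at this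
        simp only [e1] at this
        linarith
      calc A i p + mpPow A n p j ≤ (a : WithBot ℝ) + ((B - a : ℝ) : WithBot ℝ) := by
            rw [ha]; exact add_le_add (le_refl _) hIH
        _ = (B : WithBot ℝ) := by
            rw [← WithBot.coe_add]; norm_num

private lemma path_sum_le {d : ℕ} (A : Fin d → Fin d → WithBot ℝ) (M : ℝ)
    (hM : ∀ i j, A i j ≠ ⊥ → |WithBot.unbotD 0 (A i j)| ≤ M) :
    ∀ (n : ℕ) (f : ℕ → Fin d), (∀ k < n, A (f k) (f (k+1)) ≠ ⊥) →
      ∃ m : ℕ, m ≤ n ∧ m < d ∧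
        ∑ k ∈ Finset.range n, WithBot.unbotD 0 (A (f k) (f (k+1))) ≤
          ((n : ℝ) - m) * sSup (circuitAvgWeights A) + m * M := by
  have hbdd : BddAbove (circuitAvgWeights A) := by
    refine ⟨M, ?_⟩
    rintro r ⟨c, p, ⟨hc, _, harcs, _⟩, rfl⟩
    have hsum : (∑ k : Fin c, WithBot.unbotD 0 (A (p k.castSucc) (p k.succ))) ≤ c * M := by
      calc (∑ k : Fin c, WithBot.unbotD 0 (A (p k.castSucc) (p k.succ)))
          ≤ ∑ _k : Fin c, M := by
            apply Finset.sum_le_sum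
            intro k _
            exact (abs_le.mp (hM _ _ (harcs k))).2
        _ = c * M := by simp [mul_comm]
    rw [div_le_iff₀ (by exact_mod_cast hc : (0:ℝ) < c)]
    linarith [hsum]
  intro n
  induction n using Nat.strong_induction_on with
  | _ n IH =>
  intro f hf
  by_cases hrep : ∃ b, b ≤ n ∧ ∃ a, a < b ∧ f a = f b
  · -- extract a minimal circuit and remove it
    classical
    set b0 := Nat.find hrep with hb0
    obtain ⟨hb0n, a, hab, hfab⟩ := Nat.find_spec hrep
    have hmin : ∀ b' < b0, ¬ (b' ≤ n ∧ ∃ a, a < b' ∧ f a = f b') := fun b' h => Nat.find_min hrep h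
    set c := b0 - a with hcdef
    have hc0 : 0 < c := by omega
    have hacb : a + c = b0 := by omega
    set p : Fin (c+1) → Fin d := fun k => f (a + k) with hp
    have hcirc : IsElemCircuit A c p := by
      refine ⟨hc0, ?_, ?_, ?_⟩
      · simp only [hp, Fin.val_zero, Fin.val_last, add_zero, hacb]
        exact hfab
      · intro k
        simp only [hp, Fin.coe_castSucc, Fin.val_succ]
        exact hf (a + k.val) (by omega)
      · intro k1 k2 hk
        simp only [hp, Fin.coe_castSucc] at hk
        by_contra hne
        have hne' : (k1 : ℕ) ≠ (k2 : ℕ) := fun h => hne (Fin.ext h)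
        rcases lt_or_gt_of_ne hne' with hlt | hlt
        · exact hmin (a + k2) (by omega) ⟨by omega, a + k1, by omega, hk⟩
        · exact hmin (a + k1) (by omega) ⟨by omega, a + k2, by omega, hk.symm⟩
    have hmem : (∑ k : Fin c, WithBot.unbotD 0 (A (p k.castSucc) (p k.succ))) / c ∈
        circuitAvgWeights A := ⟨c, p, hcirc, rfl⟩
    have hrρ : (∑ k : Fin c, WithBot.unbotD 0 (A (p k.castSucc) (p k.succ))) ≤
        c * sSup (circuitAvgWeights A) := by
      have hle := le_csSup hbdd hmem
      rw [div_le_iff₀ (by exact_mod_cast hc0 : (0:ℝ) < c)] at hle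
      linarith
    have hcircsum : (∑ k : Fin c, WithBot.unbotD 0 (A (p k.castSucc) (p k.succ)))
        = ∑ k ∈ Finset.range c, WithBot.unbotD 0 (A (f (a + k)) (f (a + k + 1))) := by
      rw [← Fin.sum_univ_eq_sum_range (fun k => WithBot.unbotD 0 (A (f (a + k)) (f (a + k + 1))))]
      exact Finset.sum_congr rfl fun k _ => by simp [hp, Nat.add_assoc]
    -- shortened path
    set t := n - b0 with htdef
    have hn' : n = a + c + t := by omega
    set g : ℕ → Fin d := fun k => if k < a then f k else f (k + c) with hg
    have hgf : ∀ k < a + t, A (g k) (g (k+1)) ≠ ⊥ := by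
      intro k hk
      by_cases h2 : k < a
      · by_cases h1 : k + 1 < a
        · simpa [hg, h2, h1] using hf k (by omega)
        · have hk1 : k + 1 = a := by omega
          have hfr : f (k + 1 + c) = f (k + 1) := by
            rw [show k + 1 + c = b0 by omega, hk1, hfab]
          simp only [hg, if_pos h2, if_neg h1, hfr]
          exact hf k (by omega)
      · simp only [hg, if_neg h2, if_neg (show ¬ k + 1 < a by omega)]
        rw [show k + 1 + c = k + c + 1 by omega]
        exact hf (k + c) (by omega)
    have hgsum : ∑ k ∈ Finset.range (a + t), WithBot.unbotD 0 (A (g k) (g (k+1)))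
        = ∑ k ∈ Finset.range n, WithBot.unbotD 0 (A (f k) (f (k+1)))
          - ∑ k ∈ Finset.range c, WithBot.unbotD 0 (A (f (a + k)) (f (a + k + 1))) := by
      rw [hn', Finset.sum_range_add, Finset.sum_range_add, Finset.sum_range_add]
      have ea : ∀ k ∈ Finset.range a, WithBot.unbotD 0 (A (g k) (g (k+1)))
          = WithBot.unbotD 0 (A (f k) (f (k+1))) := by
        intro k hk
        rw [Finset.mem_range] at hk
        by_cases h1 : k + 1 < a
        · simp [hg, hk, h1]
        · have hk1 : k + 1 = a := by omega
          have hfr : f (k + 1 + c) = f (k + 1) := by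
            rw [show k + 1 + c = b0 by omega, hk1, hfab]
          simp [hg, hk, h1, hfr]
      have et : ∀ k ∈ Finset.range t, WithBot.unbotD 0 (A (g (a + k)) (g (a + k + 1)))
          = WithBot.unbotD 0 (A (f (a + c + k)) (f (a + c + k + 1))) := by
        intro k _
        have e1 : a + k + c = a + c + k := by omega
        have e2 : a + k + 1 + c = a + c + k + 1 := by omega
        simp only [hg, if_neg (show ¬ a + k < a by omega),
          if_neg (show ¬ a + k + 1 < a by omega), e1, e2]
      have ec : ∀ k ∈ Finset.range c, WithBot.unbotD 0 (A (f (a + k)) (f (a + k + 1)))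
          = WithBot.unbotD 0 (A (f (a + k)) (f (a + k + 1))) := fun _ _ => rfl
      rw [Finset.sum_congr rfl ea, Finset.sum_congr rfl et]
      ring
    have hat : a + t < n := by omega
    obtain ⟨m, hm1, hm2, hsum⟩ := IH (a + t) hat g hgf
    refine ⟨m, by omega, hm2, ?_⟩
    have hkey : ∑ k ∈ Finset.range n, WithBot.unbotD 0 (A (f k) (f (k+1)))
        = (∑ k ∈ Finset.range (a + t), WithBot.unbotD 0 (A (g k) (g (k+1))))
          + ∑ k : Fin c, WithBot.unbotD 0 (A (p k.castSucc) (p k.succ)) := by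
      rw [hgsum, hcircsum]; ring
    rw [hkey]
    calc (∑ k ∈ Finset.range (a + t), WithBot.unbotD 0 (A (g k) (g (k+1))))
          + ∑ k : Fin c, WithBot.unbotD 0 (A (p k.castSucc) (p k.succ))
        ≤ (((a + t : ℕ) : ℝ) - m) * sSup (circuitAvgWeights A) + m * M
          + c * sSup (circuitAvgWeights A) := add_le_add hsum hrρ
      _ = ((n : ℝ) - m) * sSup (circuitAvgWeights A) + m * M := by
          rw [hn']; push_cast; ring
  · push_neg at hrep
    have hinj : Function.Injective (fun k : Fin (n+1) => f k) := by
      intro k1 k2 hk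
      simp only at hk
      by_contra hne
      have hne' : (k1 : ℕ) ≠ (k2 : ℕ) := fun h => hne (Fin.ext h)
      rcases lt_or_gt_of_ne hne' with hlt | hlt
      · exact absurd hk (hrep k2 (by omega) k1 hlt)
      · exact absurd hk.symm (hrep k1 (by omega) k2 hlt)
    have hnd : n < d := by
      have := Fintype.card_le_of_injective _ hinj
      simpa using this
    refine ⟨n, le_refl n, hnd, ?_⟩
    have hb : ∑ k ∈ Finset.range n, WithBot.unbotD 0 (A (f k) (f (k+1)))
        ≤ ∑ _k ∈ Finset.range n, M := by
      apply Finset.sum_le_sum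
      intro k hk
      exact (abs_le.mp (hM _ _ (hf k (Finset.mem_range.mp hk)))).2
    simp only [Finset.sum_const, Finset.card_range, nsmul_eq_mul] at hb
    simpa using hb

/-- If `A` has no row of `-∞` and `ρ_max(A) ≤ 0`, then for all `n ≥ d` and `x ∈ ℝ^d`,
`max_i (A^{⊗n} x)_i ≤ (n-d)·ρ_max(A) + d·max_{A_{ij} ≠ -∞} |A_{ij}| + max_i x_i`
(stated for any upper bound `M` of the finite entries' absolute values). -/
theorem mpPow_apply_max_upper_bound {d : ℕ} (hd : 0 < d)
    (A : Fin d → Fin d → WithBot ℝ) (hA : ∀ i, ∃ j, A i j ≠ ⊥)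
    (hρ : sSup (circuitAvgWeights A) ≤ 0)
    (M : ℝ) (hM : ∀ i j, A i j ≠ ⊥ → |WithBot.unbotD 0 (A i j)| ≤ M)
    (n : ℕ) (hn : d ≤ n) (x : Fin d → ℝ) :
    Finset.univ.sup (fun i => Finset.univ.sup (fun j => mpPow A n i j + (x j : WithBot ℝ)))
      ≤ ((((n - d : ℕ) : ℝ) * sSup (circuitAvgWeights A) + d * M +
          Finset.univ.sup' (Finset.univ_nonempty_iff.mpr (Fin.pos_iff_nonempty.mp hd)) x
          : ℝ) : WithBot ℝ) := by
  set ρ := sSup (circuitAvgWeights A) with hρdef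
  set S := Finset.univ.sup' (Finset.univ_nonempty_iff.mpr (Fin.pos_iff_nonempty.mp hd)) x with hS
  set B : ℝ := ((n - d : ℕ) : ℝ) * ρ + d * M with hB
  have hM0 : 0 ≤ M := by
    obtain ⟨j, hj⟩ := hA ⟨0, hd⟩
    exact le_trans (abs_nonneg _) (hM _ _ hj)
  have hcast : ((n - d : ℕ) : ℝ) = (n : ℝ) - d := by
    rw [Nat.cast_sub hn]
  have hpow : ∀ i j, mpPow A n i j ≤ (B : WithBot ℝ) := by
    intro i j
    apply mpPow_le_of_paths A n B i j
    intro f _ _ hfv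
    obtain ⟨m, hm1, hm2, hs⟩ := path_sum_le A M hM n f hfv
    have h1 : ((n : ℝ) - m) * ρ ≤ ((n - d : ℕ) : ℝ) * ρ := by
      rw [hcast]
      have hdm : (0:ℝ) ≤ (d : ℝ) - m := by
        have : (m:ℝ) ≤ d := by exact_mod_cast hm2.le
        linarith
      nlinarith [mul_nonpos_of_nonneg_of_nonpos hdm hρ]
    have h2 : (m : ℝ) * M ≤ (d : ℝ) * M := by
      apply mul_le_mul_of_nonneg_right _ hM0
      exact_mod_cast hm2.le
    rw [hB]
    linarith
  apply Finset.sup_le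
  intro i _
  apply Finset.sup_le
  intro j _
  have hx : ((x j : ℝ) : WithBot ℝ) ≤ ((S : ℝ) : WithBot ℝ) :=
    WithBot.coe_le_coe.mpr (Finset.le_sup' x (Finset.mem_univ j))
  calc mpPow A n i j + (x j : WithBot ℝ) ≤ (B : WithBot ℝ) + ((S : ℝ) : WithBot ℝ) :=
        add_le_add (hpow i j) hx
    _ = ((B + S : ℝ) : WithBot ℝ) := by rw [← WithBot.coe_add]
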